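/- Let α, β, ζ₁, ζ₂, S₁, S₂ ∈ ℝ and let a, b ∈ ℝ² be linearly independent. Let P be the 2×2 matrix whose first row is aᵀ and second row is bᵀ, and define d := P⁻¹(S₁ − ζ₁, S₂ − ζ₂) and c := P⁻¹(α, β). Suppose the system α‖x‖² + ⟨a,x⟩ + ζ₁ = S₁, β‖x‖² + ⟨b,x⟩ + ζ₂ = S₂ has at least one solution x ∈ ℝ², and let μ₁ be the smallest real root of ‖c‖²μ² − (2⟨d,c⟩ + 1)μ + ‖d‖² = 0 (taking μ₁ := ‖d‖² if c = 0). Then x₁ := d − μ₁c is a solution of the system, and for every solution x of the system one has ‖x₁‖ ≤ ‖x‖. -/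

import Mathlib

open scoped RealInnerProductSpace

/-- Interpret a plain vector `Fin 2 → ℝ` as an element of Euclidean space `ℝ²`. -/
noncomputable def toE (v : Fin 2 → ℝ) : EuclideanSpace ℝ (Fin 2) := WithLp.toLp 2 v

/-- The 2×2 matrix whose first row is `aᵀ` and second row is `bᵀ`. -/
noncomputable def Pmat (a b : EuclideanSpace ℝ (Fin 2)) : Matrix (Fin 2) (Fin 2) ℝ :=
  !![a 0, a 1; b 0, b 1]

/-- `d := P⁻¹ (S₁ − ζ₁, S₂ − ζ₂)`. -/
noncomputable def dvec (a b : EuclideanSpace ℝ (Fin 2)) (ζ₁ ζ₂ S₁ S₂ : ℝ) :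
    EuclideanSpace ℝ (Fin 2) :=
  toE ((Pmat a b)⁻¹.mulVec ![S₁ - ζ₁, S₂ - ζ₂])

/-- `c := P⁻¹ (α, β)`. -/
noncomputable def cvec (a b : EuclideanSpace ℝ (Fin 2)) (α β : ℝ) :
    EuclideanSpace ℝ (Fin 2) :=
  toE ((Pmat a b)⁻¹.mulVec ![α, β])

theorem stmt12 (α β ζ₁ ζ₂ S₁ S₂ : ℝ) (a b : EuclideanSpace ℝ (Fin 2))
    (hab : LinearIndependent ℝ ![a, b])
    (hsol : ∃ x : EuclideanSpace ℝ (Fin 2),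
      α * ‖x‖ ^ 2 + ⟪a, x⟫ + ζ₁ = S₁ ∧ β * ‖x‖ ^ 2 + ⟪b, x⟫ + ζ₂ = S₂)
    (μ₁ : ℝ)
    (hroot : ‖cvec a b α β‖ ^ 2 * μ₁ ^ 2 -
      (2 * ⟪dvec a b ζ₁ ζ₂ S₁ S₂, cvec a b α β⟫ + 1) * μ₁ +
      ‖dvec a b ζ₁ ζ₂ S₁ S₂‖ ^ 2 = 0)
    (hsmallest : ∀ μ : ℝ, ‖cvec a b α β‖ ^ 2 * μ ^ 2 -
      (2 * ⟪dvec a b ζ₁ ζ₂ S₁ S₂, cvec a b α β⟫ + 1) * μ +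
      ‖dvec a b ζ₁ ζ₂ S₁ S₂‖ ^ 2 = 0 → μ₁ ≤ μ) :
    (α * ‖dvec a b ζ₁ ζ₂ S₁ S₂ - μ₁ • cvec a b α β‖ ^ 2 +
        ⟪a, dvec a b ζ₁ ζ₂ S₁ S₂ - μ₁ • cvec a b α β⟫ + ζ₁ = S₁ ∧
      β * ‖dvec a b ζ₁ ζ₂ S₁ S₂ - μ₁ • cvec a b α β‖ ^ 2 +
        ⟪b, dvec a b ζ₁ ζ₂ S₁ S₂ - μ₁ • cvec a b α β⟫ + ζ₂ = S₂) ∧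
    ∀ x : EuclideanSpace ℝ (Fin 2),
      α * ‖x‖ ^ 2 + ⟪a, x⟫ + ζ₁ = S₁ → β * ‖x‖ ^ 2 + ⟪b, x⟫ + ζ₂ = S₂ →
      ‖dvec a b ζ₁ ζ₂ S₁ S₂ - μ₁ • cvec a b α β‖ ≤ ‖x‖ := by
  set d : EuclideanSpace ℝ (Fin 2) := dvec a b ζ₁ ζ₂ S₁ S₂ with hd
  set c : EuclideanSpace ℝ (Fin 2) := cvec a b α β with hc
  -- the matrix is invertible
  have hU : IsUnit (Pmat a b) := by
    rw [← Matrix.linearIndependent_rows_iff_isUnit]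
    have h2 := hab.map' (WithLp.linearEquiv 2 ℝ (Fin 2 → ℝ)).toLinearMap
      (LinearEquiv.ker _)
    convert h2 using 1
    funext i
    fin_cases i <;> · funext j; fin_cases j <;> simp [Pmat]
    all_goals rfl
  have hUdet : IsUnit (Pmat a b).det := (Matrix.isUnit_iff_isUnit_det _).mp hU
  have hPv : ∀ v : Fin 2 → ℝ, (Pmat a b).mulVec ((Pmat a b)⁻¹.mulVec v) = v := by
    intro v
    rw [Matrix.mulVec_mulVec, Matrix.mul_nonsing_inv _ hUdet, Matrix.one_mulVec]
  have hrow : ∀ x : EuclideanSpace ℝ (Fin 2),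
      (Pmat a b).mulVec x = ![⟪a, x⟫, ⟪b, x⟫] := by
    intro x
    funext i
    fin_cases i <;> simp [Pmat, Matrix.mulVec, dotProduct, PiLp.inner_apply,
      Fin.sum_univ_two, Matrix.vecHead, Matrix.vecTail] <;> ring
  have hPd : (Pmat a b).mulVec d = ![S₁ - ζ₁, S₂ - ζ₂] := hPv ![S₁ - ζ₁, S₂ - ζ₂]
  have hPc : (Pmat a b).mulVec c = ![α, β] := hPv ![α, β]
  have had : ⟪a, d⟫ = S₁ - ζ₁ := by
    have := congrFun ((hrow d).symm.trans hPd) 0; simpa using this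
  have hbd : ⟪b, d⟫ = S₂ - ζ₂ := by
    have := congrFun ((hrow d).symm.trans hPd) 1; simpa using this
  have hac : ⟪a, c⟫ = α := by
    have := congrFun ((hrow c).symm.trans hPc) 0; simpa using this
  have hbc : ⟪b, c⟫ = β := by
    have := congrFun ((hrow c).symm.trans hPc) 1; simpa using this
  -- norm expansion
  have hnorm : ∀ μ : ℝ, ‖d - μ • c‖ ^ 2 = ‖d‖ ^ 2 - 2 * μ * ⟪d, c⟫ + μ ^ 2 * ‖c‖ ^ 2 := by
    intro μ
    rw [norm_sub_sq_real, real_inner_smul_right, norm_smul, Real.norm_eq_abs, mul_pow, sq_abs]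
    ring
  -- ‖x₁‖² = μ₁
  have hx1sq : ‖d - μ₁ • c‖ ^ 2 = μ₁ := by
    have h := hnorm μ₁; linear_combination h + hroot
  -- inner products with x₁-type vectors
  have hinner : ∀ (u : EuclideanSpace ℝ (Fin 2)) (μ : ℝ),
      ⟪u, d - μ • c⟫ = ⟪u, d⟫ - μ * ⟪u, c⟫ := by
    intro u μ
    rw [inner_sub_right, real_inner_smul_right]
  refine ⟨⟨?_, ?_⟩, ?_⟩
  · rw [hx1sq, hinner a μ₁, had, hac]; ring
  · rw [hx1sq, hinner b μ₁, hbd, hbc]; ring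
  · intro x h1 h2
    -- x = d - ‖x‖² • c
    have hinj : Function.Injective (Pmat a b).mulVec :=
      Matrix.mulVec_injective_iff_isUnit.mpr hU
    have hx : x = d - ‖x‖ ^ 2 • c := by
      apply WithLp.ofLp_injective 2
      apply hinj
      rw [hrow x, hrow (d - ‖x‖ ^ 2 • c)]
      have e1 : ⟪a, x⟫ = ⟪a, d - ‖x‖ ^ 2 • c⟫ := by
        rw [hinner, had, hac]; linarith
      have e2 : ⟪b, x⟫ = ⟪b, d - ‖x‖ ^ 2 • c⟫ := by
        rw [hinner, hbd, hbc]; linarith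
      rw [e1, e2]
    have hxroot : ‖c‖ ^ 2 * (‖x‖ ^ 2) ^ 2 - (2 * ⟪d, c⟫ + 1) * ‖x‖ ^ 2 + ‖d‖ ^ 2 = 0 := by
      have := hnorm (‖x‖ ^ 2)
      rw [← hx] at this
      linear_combination -this
    have hle : μ₁ ≤ ‖x‖ ^ 2 := hsmallest _ hxroot
    have h1sq : ‖d - μ₁ • c‖ ^ 2 ≤ ‖x‖ ^ 2 := by rw [hx1sq]; exact hle
    rw [← Real.sqrt_sq (norm_nonneg (d - μ₁ • c)), ← Real.sqrt_sq (norm_nonneg x)]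
    exact Real.sqrt_le_sqrt h1sq
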